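/- With t_{x,y} as above (the N-fold coproduct action of gl_{k,m} generators on (ℂ^n)^{⊗N}), the relation [t_{x,y}, t_{z,x}] = t_{z,y} · H_x holds for all distinct x, y, z ∈ [n], where H_x = (d_x)^{⊗N} and d_x = id − 2e_{x,x} if x > k, d_x = id if x ≤ k. -/

import Mathlib

open Matrix BigOperators

noncomputable section

def E (n : ℕ) (x y : Fin n) : Matrix (Fin n) (Fin n) ℂ := Matrix.single x y 1

def dsmall (n k : ℕ) (z : Fin n) : Matrix (Fin n) (Fin n) ℂ :=
  if (z : ℕ) < k then 1 else 1 - (2 : ℂ) • E n z z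

def kronN (n N : ℕ) (A : Fin N → Matrix (Fin n) (Fin n) ℂ) :
    Matrix (Fin N → Fin n) (Fin N → Fin n) ℂ :=
  Matrix.of fun f g => ∏ i : Fin N, A i (f i) (g i)

/-- `t_{x,y} = ∑_{j=1}^N (d_y)^{⊗(j−1)} ⊗ e_{y,x} ⊗ (d_x)^{⊗(N−j)}`. -/
def tOp (n k N : ℕ) (x y : Fin n) : Matrix (Fin N → Fin n) (Fin N → Fin n) ℂ :=
  ∑ j : Fin N, kronN n N (fun i =>
    if i < j then dsmall n k y else if i = j then E n y x else dsmall n k x)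

/-- `H_x = (d_x)^{⊗N}`. -/
def Hx (n k N : ℕ) (x : Fin n) : Matrix (Fin N → Fin n) (Fin N → Fin n) ℂ :=
  kronN n N (fun _ => dsmall n k x)

/-! ### Auxiliary lemmas -/

lemma kronN_mul (n N : ℕ) (A B : Fin N → Matrix (Fin n) (Fin n) ℂ) :
    kronN n N A * kronN n N B = kronN n N (fun i => A i * B i) := by
  ext f g
  simp only [kronN, Matrix.mul_apply, Matrix.of_apply]
  rw [Fintype.prod_sum (fun i m => A i (f i) m * B i m (g i))]
  exact Finset.sum_congr rfl fun h _ => (Finset.prod_mul_distrib).symm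

lemma kronN_zero_of (n N : ℕ) (A : Fin N → Matrix (Fin n) (Fin n) ℂ) (j : Fin N)
    (h : A j = 0) : kronN n N A = 0 := by
  ext f g
  simp only [kronN, Matrix.of_apply, Matrix.zero_apply]
  exact Finset.prod_eq_zero (Finset.mem_univ j) (by simp [h])

lemma kronN_congr (n N : ℕ) (A B : Fin N → Matrix (Fin n) (Fin n) ℂ)
    (h : ∀ i, A i = B i) : kronN n N A = kronN n N B := by
  have : A = B := funext h
  rw [this]

lemma kronN_congr_smul (n N : ℕ) (A B : Fin N → Matrix (Fin n) (Fin n) ℂ)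
    (s : Fin N → ℂ) (hs : ∏ i, s i = 1) (h : ∀ i, A i = s i • B i) :
    kronN n N A = kronN n N B := by
  ext f g
  simp only [kronN, Matrix.of_apply]
  calc ∏ i, A i (f i) (g i) = ∏ i, s i * B i (f i) (g i) := by
        refine Finset.prod_congr rfl fun i _ => ?_
        rw [h i, Matrix.smul_apply, smul_eq_mul]
    _ = (∏ i, s i) * ∏ i, B i (f i) (g i) := Finset.prod_mul_distrib
    _ = ∏ i, B i (f i) (g i) := by rw [hs, one_mul]

lemma E_mul_E (n : ℕ) (a b c : Fin n) : E n a b * E n b c = E n a c := by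
  simp [E]

lemma E_mul_E_ne (n : ℕ) (a b c d : Fin n) (h : b ≠ c) : E n a b * E n c d = 0 := by
  unfold E
  exact Matrix.single_mul_single_of_ne (c := (1 : ℂ)) a b c h 1

lemma d_mul_E (n k : ℕ) (w a b : Fin n) (h : w ≠ a) :
    dsmall n k w * E n a b = E n a b := by
  unfold dsmall; split
  · rw [one_mul]
  · rw [sub_mul, one_mul, smul_mul_assoc, E_mul_E_ne n w w a b h, smul_zero, sub_zero]

lemma E_mul_d (n k : ℕ) (a b w : Fin n) (h : w ≠ b) :
    E n a b * dsmall n k w = E n a b := by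
  unfold dsmall; split
  · rw [mul_one]
  · rw [mul_sub, mul_one, mul_smul_comm, E_mul_E_ne n a b w w h.symm, smul_zero, sub_zero]

lemma d_comm (n k : ℕ) (a b : Fin n) (h : a ≠ b) :
    dsmall n k a * dsmall n k b = dsmall n k b * dsmall n k a := by
  have h1 : E n a a * E n b b = 0 := E_mul_E_ne n a a b b h
  have h2 : E n b b * E n a a = 0 := E_mul_E_ne n b b a a h.symm
  unfold dsmall
  split <;> split <;>
    simp only [one_mul, mul_one, sub_mul, mul_sub, smul_mul_assoc, mul_smul_comm,
      h1, h2, smul_zero, sub_zero]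
  abel

lemma E_mul_d_self (n k : ℕ) (a x : Fin n) :
    E n a x * dsmall n k x = (if (x : ℕ) < k then (1 : ℂ) else -1) • E n a x := by
  unfold dsmall; split
  · rw [mul_one, one_smul]
  · rw [mul_sub, mul_one, mul_smul_comm, E_mul_E n a x x]
    module

lemma d_self_mul_E (n k : ℕ) (x b : Fin n) :
    dsmall n k x * E n x b = (if (x : ℕ) < k then (1 : ℂ) else -1) • E n x b := by
  unfold dsmall; split
  · rw [one_mul, one_smul]
  · rw [sub_mul, one_mul, smul_mul_assoc, E_mul_E n x x b]
    module

theorem stmt10 (n k N : ℕ) (x y z : Fin n)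
    (hxy : x ≠ y) (hyz : y ≠ z) (hxz : x ≠ z) :
    tOp n k N x y * tOp n k N z x - tOp n k N z x * tOp n k N x y
      = tOp n k N z y * Hx n k N x := by
  classical
  set ε : ℂ := if (x : ℕ) < k then 1 else -1 with hε
  have hε2 : ε * ε = 1 := by rw [hε]; split <;> norm_num
  set P : Fin N → Fin N → Matrix (Fin n) (Fin n) ℂ := fun j i =>
    if i < j then dsmall n k y else if i = j then E n y x else dsmall n k x with hP
  set Q : Fin N → Fin N → Matrix (Fin n) (Fin n) ℂ := fun j i =>
    if i < j then dsmall n k x else if i = j then E n x z else dsmall n k z with hQ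
  set R : Fin N → Fin N → Matrix (Fin n) (Fin n) ℂ := fun j i =>
    if i < j then dsmall n k y else if i = j then E n y z else dsmall n k z with hR
  have e1 : tOp n k N x y = ∑ j : Fin N, kronN n N (P j) := rfl
  have e2 : tOp n k N z x = ∑ j : Fin N, kronN n N (Q j) := rfl
  have e3 : tOp n k N z y = ∑ j : Fin N, kronN n N (R j) := rfl
  rw [e1, e2, e3, Hx, Finset.sum_mul_sum, Finset.sum_mul_sum, Finset.sum_mul,
    Finset.sum_comm (s := Finset.univ) (t := Finset.univ)
      (f := fun a b => kronN n N (Q a) * kronN n N (P b)),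
    ← Finset.sum_sub_distrib]
  refine Finset.sum_congr rfl fun j _ => ?_
  rw [← Finset.sum_sub_distrib, Finset.sum_eq_single j]
  · -- diagonal term
    rw [kronN_mul, kronN_mul, kronN_mul]
    have hz : kronN n N (fun i => Q j i * P j i) = 0 := by
      refine kronN_zero_of n N _ j ?_
      simp only [hP, hQ, lt_self_iff_false, if_false, if_pos rfl, if_true]
      exact E_mul_E_ne n x z y x hyz.symm
    rw [hz, sub_zero]
    refine kronN_congr n N _ _ fun i => ?_
    rcases lt_trichotomy i j with hij | hij | hij
    · simp only [hP, hQ, hR, if_pos hij]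
    · subst hij
      simp only [hP, hQ, hR, lt_self_iff_false, if_false, if_pos rfl, if_true]
      rw [E_mul_E n y x z, E_mul_d n k y z x hxz]
    · have h1 : ¬ i < j := not_lt.mpr hij.le
      have h2 : i ≠ j := ne_of_gt hij
      simp only [hP, hQ, hR, if_neg h1, if_neg h2]
      exact d_comm n k x z hxz
  · -- off-diagonal terms vanish
    intro l _ hlj
    rw [kronN_mul, kronN_mul, sub_eq_zero]
    rcases lt_or_gt_of_ne hlj with hlj' | hlj'
    · -- l < j : factorwise commutation
      refine kronN_congr n N _ _ fun i => ?_
      rcases lt_trichotomy i l with hil | hil | hil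
      · have hij : i < j := hil.trans hlj'
        simp only [hP, hQ, if_pos hil, if_pos hij]
        exact d_comm n k y x hxy.symm
      · subst hil
        have hij : i < j := hlj'
        simp only [hP, hQ, lt_self_iff_false, if_false, if_pos rfl, if_pos hij, if_true]
        rw [d_mul_E n k y x z hxy.symm, E_mul_d n k x z y hyz]
      · have h1 : ¬ i < l := not_lt.mpr hil.le
        have h2 : i ≠ l := ne_of_gt hil
        rcases lt_trichotomy i j with hij | hij | hij
        · simp only [hP, hQ, if_neg h1, if_neg h2, if_pos hij]
          exact d_comm n k y z hyz
        · subst hij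
          simp only [hP, hQ, lt_self_iff_false, if_false, if_pos rfl, if_neg h1,
            if_neg h2, if_true]
          rw [E_mul_d n k y x z hxz.symm, d_mul_E n k z y x hyz.symm]
        · have h3 : ¬ i < j := not_lt.mpr hij.le
          have h4 : i ≠ j := ne_of_gt hij
          simp only [hP, hQ, if_neg h1, if_neg h2, if_neg h3, if_neg h4]
          exact d_comm n k x z hxz
    · -- j < l : commutation up to two sign factors that cancel
      refine kronN_congr_smul n N _ _
        (fun i => if i = j then ε else if i = l then ε else 1) ?_ ?_
      · rw [← Finset.mul_prod_erase _ _ (Finset.mem_univ j),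
          ← Finset.mul_prod_erase _ _ (Finset.mem_erase.mpr ⟨hlj, Finset.mem_univ l⟩)]
        have hrest : ∏ i ∈ (Finset.univ.erase j).erase l,
            (if i = j then ε else if i = l then ε else 1) = 1 := by
          refine Finset.prod_eq_one fun i hi => ?_
          rcases Finset.mem_erase.mp hi with ⟨hil, hi'⟩
          rcases Finset.mem_erase.mp hi' with ⟨hij, _⟩
          rw [if_neg hij, if_neg hil]
        rw [hrest, if_pos rfl, if_neg hlj, if_pos rfl, mul_one, hε2]
      · intro i
        rcases lt_trichotomy i j with hij | hij | hij
        · have hil : i < l := hij.trans hlj'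
          have h2 : i ≠ j := ne_of_lt hij
          have h3 : i ≠ l := ne_of_lt hil
          simp only [hP, hQ, if_pos hij, if_pos hil, if_neg h2, if_neg h3]
          rw [one_smul]
          exact d_comm n k y x hxy.symm
        · subst hij
          have hil : i < l := hlj'
          simp only [hP, hQ, lt_self_iff_false, if_false, if_pos rfl, if_pos hil, if_true]
          rw [d_mul_E n k x y x hxy, E_mul_d_self n k y x, ← hε]
        · have h1 : ¬ i < j := not_lt.mpr hij.le
          have h2 : i ≠ j := ne_of_gt hij
          rcases lt_trichotomy i l with hil | hil | hil
          · have h3 : i ≠ l := ne_of_lt hil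
            simp only [hP, hQ, if_neg h1, if_neg h2, if_pos hil, if_neg h3]
            rw [one_smul]
          · subst hil
            simp only [hP, hQ, lt_self_iff_false, if_false, if_pos rfl, if_neg h1,
              if_neg h2, if_true]
            rw [E_mul_d n k x z x hxz, d_self_mul_E n k x z, ← hε]
          · have h3 : ¬ i < l := not_lt.mpr hil.le
            have h4 : i ≠ l := ne_of_gt hil
            simp only [hP, hQ, if_neg h1, if_neg h2, if_neg h3, if_neg h4]
            rw [one_smul]
            exact d_comm n k x z hxz
  · intro hj
    exact absurd (Finset.mem_univ j) hj
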